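/- Let ξ̄ > 0, let g : ℝ → ℝ be Lipschitz with constant L > 0, let J⁻ ⊆ [0,ξ̄] be a measurable set, let Z̄ ∈ L¹([0,ξ̄]), and define Φ(η,z) = min(z,0) if η ∈ J⁻ and Φ(η,z) = z otherwise. For continuous maps Y : [0,∞) → L¹([0,ξ̄]) with finite weighted norm ‖Y‖_* = sup_{t≥0} e^{−Lξ̄t} ∫₀^{ξ̄} |Y(t,ξ)| dξ, define the transformation (𝒯Y)(t,ξ) = Z̄(ξ) + ∫₀^t (1/2)·g( ∫₀^ξ Φ(η, Y(s,η)) dη ) ds. Then for any two such maps Y, Ỹ one has ‖𝒯Y − 𝒯Ỹ‖_* ≤ (1/2)·‖Y − Ỹ‖_*, i.e. 𝒯 is a strict contraction. -/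

import Mathlib

open MeasureTheory Set Real
open scoped Classical

/-- The truncation `Φ(η,z) = min(z,0)` on `J⁻` and `Φ(η,z) = z` elsewhere. -/
noncomputable def dissPhi (Jm : Set ℝ) (η z : ℝ) : ℝ :=
  if η ∈ Jm then min z 0 else z

/-- The transformation `(𝒯Y)(t,ξ) = Z̄(ξ) + ∫₀^t (1/2)·g(∫₀^ξ Φ(η,Y(s,η)) dη) ds`
of the dissipative-solutions construction. -/
noncomputable def dissT (Jm : Set ℝ) (Zbar : ℝ → ℝ) (g : ℝ → ℝ)
    (Y : ℝ → ℝ → ℝ) (t ξ : ℝ) : ℝ :=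
  Zbar ξ + ∫ s in (0:ℝ)..t, (1 / 2) * g (∫ η in (0:ℝ)..ξ, dissPhi Jm η (Y s η))

/-- The weighted `L¹`-norm `‖Y‖_* = sup_{t ≥ 0} e^{-Lξ̄t} ∫₀^{ξ̄} |Y(t,ξ)| dξ`. -/
noncomputable def dissNorm (ξbar L : ℝ) (Y : ℝ → ℝ → ℝ) : ℝ :=
  sSup {r : ℝ | ∃ t : ℝ, 0 ≤ t ∧
    r = Real.exp (-(L * ξbar * t)) * ∫ ξ in (0:ℝ)..ξbar, |Y t ξ|}


lemma dissPhi_lip (Jm : Set ℝ) (η z w : ℝ) :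
    |dissPhi Jm η z - dissPhi Jm η w| ≤ |z - w| := by
  unfold dissPhi
  split
  · calc |min z 0 - min w 0| ≤ max |z - w| |0 - 0| := abs_min_sub_min_le_max z 0 w 0
      _ = |z - w| := by simp
  · exact le_rfl

lemma dissPhi_comp_eq (Jm : Set ℝ) (f : ℝ → ℝ) :
    (fun η => dissPhi Jm η (f η))
      = fun η => f η - Jm.indicator (fun η => max (f η) 0) η := by
  funext η
  unfold dissPhi
  by_cases h : η ∈ Jm
  · simp only [h, if_true, Set.indicator_of_mem h]
    have := min_add_max (f η) 0
    linarith
  · simp [h]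

lemma dissPhi_integrableOn {Jm : Set ℝ} (hJm : MeasurableSet Jm) {f : ℝ → ℝ} {s : Set ℝ}
    (hf : IntegrableOn f s) :
    IntegrableOn (fun η => dissPhi Jm η (f η)) s := by
  rw [dissPhi_comp_eq]
  exact hf.sub (hf.pos_part.indicator hJm)

lemma dissPhi_int_diff_le {ξbar : ℝ} (hξbar : 0 ≤ ξbar) {Jm : Set ℝ} (hJm : MeasurableSet Jm)
    {f₁ f₂ : ℝ → ℝ} (h₁ : IntegrableOn f₁ (Set.Icc 0 ξbar))
    (h₂ : IntegrableOn f₂ (Set.Icc 0 ξbar)) {ξ : ℝ} (hξ : ξ ∈ Set.Icc 0 ξbar) :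
    |(∫ η in (0:ℝ)..ξ, dissPhi Jm η (f₁ η)) - ∫ η in (0:ℝ)..ξ, dissPhi Jm η (f₂ η)|
      ≤ ∫ η in (0:ℝ)..ξbar, |f₁ η - f₂ η| := by
  obtain ⟨hξ0, hξb⟩ := hξ
  have hsub : Set.uIcc (0:ℝ) ξ ⊆ Set.Icc 0 ξbar := by
    rw [Set.uIcc_of_le hξ0]; exact Set.Icc_subset_Icc le_rfl hξb
  have hI1 : IntervalIntegrable (fun η => dissPhi Jm η (f₁ η)) volume 0 ξ :=
    ((dissPhi_integrableOn hJm h₁).mono_set hsub).intervalIntegrable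
  have hI2 : IntervalIntegrable (fun η => dissPhi Jm η (f₂ η)) volume 0 ξ :=
    ((dissPhi_integrableOn hJm h₂).mono_set hsub).intervalIntegrable
  have hd : IntegrableOn (fun η => |f₁ η - f₂ η|) (Set.Icc 0 ξbar) := (h₁.sub h₂).abs
  have hdξ : IntervalIntegrable (fun η => |f₁ η - f₂ η|) volume 0 ξ :=
    (hd.mono_set hsub).intervalIntegrable
  have hdξbar : IntervalIntegrable (fun η => |f₁ η - f₂ η|) volume 0 ξbar := by
    apply IntegrableOn.intervalIntegrable
    rw [Set.uIcc_of_le hξbar]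
    exact hd
  calc |(∫ η in (0:ℝ)..ξ, dissPhi Jm η (f₁ η)) - ∫ η in (0:ℝ)..ξ, dissPhi Jm η (f₂ η)|
      = |∫ η in (0:ℝ)..ξ, (dissPhi Jm η (f₁ η) - dissPhi Jm η (f₂ η))| := by
        rw [intervalIntegral.integral_sub hI1 hI2]
    _ ≤ ∫ η in (0:ℝ)..ξ, |dissPhi Jm η (f₁ η) - dissPhi Jm η (f₂ η)| :=
        intervalIntegral.abs_integral_le_integral_abs hξ0
    _ ≤ ∫ η in (0:ℝ)..ξ, |f₁ η - f₂ η| :=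
        intervalIntegral.integral_mono_on hξ0 ((hI1.sub hI2).abs) hdξ
          (fun x _ => dissPhi_lip Jm x (f₁ x) (f₂ x))
    _ ≤ ∫ η in (0:ℝ)..ξbar, |f₁ η - f₂ η| :=
        intervalIntegral.integral_mono_interval le_rfl hξ0 hξb
          (Filter.Eventually.of_forall fun x => abs_nonneg _) hdξbar

lemma dissA_tendsto {ξbar : ℝ} (hξbar : 0 ≤ ξbar) {Jm : Set ℝ} (hJm : MeasurableSet Jm)
    {f : ℝ → ℝ → ℝ}
    (hint : ∀ s : ℝ, 0 ≤ s → IntegrableOn (f s) (Set.Icc 0 ξbar))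
    (hcont : ∀ s₀ : ℝ, 0 ≤ s₀ →
      Filter.Tendsto (fun s => ∫ η in (0:ℝ)..ξbar, |f s η - f s₀ η|)
        (nhdsWithin s₀ (Set.Ici 0)) (nhds 0))
    {ξ : ℝ} (hξ : ξ ∈ Set.Icc 0 ξbar) {s₀ : ℝ} (hs₀ : 0 ≤ s₀) :
    Filter.Tendsto (fun s => ∫ η in (0:ℝ)..ξ, dissPhi Jm η (f s η))
      (nhdsWithin s₀ (Set.Ici 0)) (nhds (∫ η in (0:ℝ)..ξ, dissPhi Jm η (f s₀ η))) := by
  rw [tendsto_iff_dist_tendsto_zero]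
  apply tendsto_of_tendsto_of_tendsto_of_le_of_le' tendsto_const_nhds (hcont s₀ hs₀)
  · exact Filter.Eventually.of_forall fun s => dist_nonneg
  · filter_upwards [self_mem_nhdsWithin] with s hs
    rw [Real.dist_eq]
    exact dissPhi_int_diff_le hξbar hJm (hint s hs) (hint s₀ hs₀) hξ

/-- The transformation `𝒯` of the dissipative-solutions construction is a strict
contraction with constant `1/2` in the weighted norm, on continuous maps
`Y : [0,∞) → L¹([0,ξ̄])` with finite weighted norm. -/
theorem stmt13 (ξbar L : ℝ) (hξbar : 0 < ξbar) (hL : 0 < L)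
    (g : ℝ → ℝ) (hg : ∀ a b : ℝ, |g a - g b| ≤ L * |a - b|)
    (Jm : Set ℝ) (hJm : MeasurableSet Jm) (hJmsub : Jm ⊆ Set.Icc 0 ξbar)
    (Zbar : ℝ → ℝ) (hZbar : IntegrableOn Zbar (Set.Icc 0 ξbar))
    (Y Ytilde : ℝ → ℝ → ℝ)
    (hYint : ∀ t : ℝ, 0 ≤ t → IntegrableOn (Y t) (Set.Icc 0 ξbar))
    (hYtint : ∀ t : ℝ, 0 ≤ t → IntegrableOn (Ytilde t) (Set.Icc 0 ξbar))
    (hYcont : ∀ t₀ : ℝ, 0 ≤ t₀ →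
      Filter.Tendsto (fun t => ∫ ξ in (0:ℝ)..ξbar, |Y t ξ - Y t₀ ξ|)
        (nhdsWithin t₀ (Set.Ici 0)) (nhds 0))
    (hYtcont : ∀ t₀ : ℝ, 0 ≤ t₀ →
      Filter.Tendsto (fun t => ∫ ξ in (0:ℝ)..ξbar, |Ytilde t ξ - Ytilde t₀ ξ|)
        (nhdsWithin t₀ (Set.Ici 0)) (nhds 0))
    (hYbdd : ∃ B : ℝ, ∀ t : ℝ, 0 ≤ t →
      Real.exp (-(L * ξbar * t)) * ∫ ξ in (0:ℝ)..ξbar, |Y t ξ| ≤ B)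
    (hYtbdd : ∃ B : ℝ, ∀ t : ℝ, 0 ≤ t →
      Real.exp (-(L * ξbar * t)) * ∫ ξ in (0:ℝ)..ξbar, |Ytilde t ξ| ≤ B) :
    dissNorm ξbar L (fun t ξ => dissT Jm Zbar g Y t ξ - dissT Jm Zbar g Ytilde t ξ) ≤
      (1 / 2) * dissNorm ξbar L (fun t ξ => Y t ξ - Ytilde t ξ) := by
  obtain ⟨B, hB⟩ := hYbdd
  obtain ⟨B', hB'⟩ := hYtbdd
  have hξ0 : (0:ℝ) ≤ ξbar := hξbar.le
  have hgc : Continuous g := by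
    have : LipschitzWith (Real.toNNReal L) g := by
      apply LipschitzWith.of_dist_le_mul
      intro x y
      rw [Real.dist_eq, Real.dist_eq, Real.coe_toNNReal L hL.le]
      exact hg x y
    exact this.continuous
  -- notation
  set D : ℝ → ℝ := fun s => ∫ ξ in (0:ℝ)..ξbar, |Y s ξ - Ytilde s ξ| with hDdef
  set N : ℝ := dissNorm ξbar L (fun t ξ => Y t ξ - Ytilde t ξ) with hNdef
  have hWint : ∀ t : ℝ, 0 ≤ t →
      IntegrableOn (fun ξ => |Y t ξ - Ytilde t ξ|) (Set.Icc 0 ξbar) :=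
    fun t ht => ((hYint t ht).sub (hYtint t ht)).abs
  have hWII : ∀ t : ℝ, 0 ≤ t →
      IntervalIntegrable (fun ξ => |Y t ξ - Ytilde t ξ|) volume 0 ξbar := by
    intro t ht
    apply IntegrableOn.intervalIntegrable
    rw [Set.uIcc_of_le hξ0]
    exact hWint t ht
  have hDnonneg : ∀ t : ℝ, 0 ≤ D t :=
    fun t => intervalIntegral.integral_nonneg hξ0 (fun _ _ => abs_nonneg _)
  -- N is the sup of a bounded-above set
  have hbdd : BddAbove {r : ℝ | ∃ t : ℝ, 0 ≤ t ∧
      r = Real.exp (-(L * ξbar * t)) * ∫ ξ in (0:ℝ)..ξbar, |Y t ξ - Ytilde t ξ|} := by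
    refine ⟨B + B', ?_⟩
    rintro r ⟨t, ht, rfl⟩
    have hYabs : IntervalIntegrable (fun ξ => |Y t ξ|) volume 0 ξbar := by
      apply IntegrableOn.intervalIntegrable
      rw [Set.uIcc_of_le hξ0]; exact (hYint t ht).abs
    have hYtabs : IntervalIntegrable (fun ξ => |Ytilde t ξ|) volume 0 ξbar := by
      apply IntegrableOn.intervalIntegrable
      rw [Set.uIcc_of_le hξ0]; exact (hYtint t ht).abs
    have h1 : D t ≤ (∫ ξ in (0:ℝ)..ξbar, |Y t ξ|) + ∫ ξ in (0:ℝ)..ξbar, |Ytilde t ξ| := by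
      rw [← intervalIntegral.integral_add hYabs hYtabs]
      exact intervalIntegral.integral_mono_on hξ0 (hWII t ht) (hYabs.add hYtabs)
        (fun x _ => abs_sub (Y t x) (Ytilde t x))
    have he : (0:ℝ) < Real.exp (-(L * ξbar * t)) := Real.exp_pos _
    have h2 := mul_le_mul_of_nonneg_left h1 he.le
    rw [mul_add] at h2
    have h3 := hB t ht
    have h4 := hB' t ht
    calc Real.exp (-(L * ξbar * t)) * ∫ ξ in (0:ℝ)..ξbar, |Y t ξ - Ytilde t ξ|
        = Real.exp (-(L * ξbar * t)) * D t := rfl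
      _ ≤ _ := h2
      _ ≤ B + B' := add_le_add h3 h4
  have hNis : N = sSup {r : ℝ | ∃ t : ℝ, 0 ≤ t ∧
      r = Real.exp (-(L * ξbar * t)) * ∫ ξ in (0:ℝ)..ξbar, |Y t ξ - Ytilde t ξ|} := rfl
  have hmemN : ∀ t : ℝ, 0 ≤ t → Real.exp (-(L * ξbar * t)) * D t ≤ N := by
    intro t ht
    rw [hNis]
    exact le_csSup hbdd ⟨t, ht, rfl⟩
  have hNnonneg : 0 ≤ N :=
    le_trans (mul_nonneg (Real.exp_pos _).le (hDnonneg 0)) (hmemN 0 le_rfl)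
  have hDle : ∀ s : ℝ, 0 ≤ s → D s ≤ N * Real.exp (L * ξbar * s) := by
    intro s hs
    have h := hmemN s hs
    have he : (0:ℝ) < Real.exp (L * ξbar * s) := Real.exp_pos _
    rw [Real.exp_neg] at h
    calc D s = Real.exp (L * ξbar * s) * ((Real.exp (L * ξbar * s))⁻¹ * D s) := by
          field_simp
      _ ≤ Real.exp (L * ξbar * s) * N := mul_le_mul_of_nonneg_left h he.le
      _ = N * Real.exp (L * ξbar * s) := mul_comm _ _
  -- the main estimate
  rw [show dissNorm ξbar L
      (fun t ξ => dissT Jm Zbar g Y t ξ - dissT Jm Zbar g Ytilde t ξ)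
      = sSup {r : ℝ | ∃ t : ℝ, 0 ≤ t ∧ r = Real.exp (-(L * ξbar * t)) *
          ∫ ξ in (0:ℝ)..ξbar, |dissT Jm Zbar g Y t ξ - dissT Jm Zbar g Ytilde t ξ|} from rfl]
  apply Real.sSup_le
  swap
  · exact mul_nonneg (by norm_num) hNnonneg
  rintro r ⟨t, ht, rfl⟩
  -- continuity and integrability of the integrands in s
  have hcontY : ∀ ξ ∈ Set.Icc (0:ℝ) ξbar,
      ContinuousOn (fun s => (1 / 2) * g (∫ η in (0:ℝ)..ξ, dissPhi Jm η (Y s η)))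
        (Set.Icc 0 t) := by
    intro ξ hξ s₀ hs₀
    have h := ((hgc.tendsto _).comp
      (dissA_tendsto hξ0 hJm hYint hYcont hξ hs₀.1)).const_mul (1/2 : ℝ)
    exact (h.mono_left (nhdsWithin_mono s₀ (fun x hx => hx.1)))
  have hcontYt : ∀ ξ ∈ Set.Icc (0:ℝ) ξbar,
      ContinuousOn (fun s => (1 / 2) * g (∫ η in (0:ℝ)..ξ, dissPhi Jm η (Ytilde s η)))
        (Set.Icc 0 t) := by
    intro ξ hξ s₀ hs₀
    have h := ((hgc.tendsto _).comp
      (dissA_tendsto hξ0 hJm hYtint hYtcont hξ hs₀.1)).const_mul (1/2 : ℝ)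
    exact (h.mono_left (nhdsWithin_mono s₀ (fun x hx => hx.1)))
  have hIY : ∀ ξ ∈ Set.Icc (0:ℝ) ξbar,
      IntervalIntegrable (fun s => (1 / 2) * g (∫ η in (0:ℝ)..ξ, dissPhi Jm η (Y s η)))
        volume 0 t := by
    intro ξ hξ
    apply ContinuousOn.intervalIntegrable
    rw [Set.uIcc_of_le ht]
    exact hcontY ξ hξ
  have hIYt : ∀ ξ ∈ Set.Icc (0:ℝ) ξbar,
      IntervalIntegrable (fun s => (1 / 2) * g (∫ η in (0:ℝ)..ξ, dissPhi Jm η (Ytilde s η)))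
        volume 0 t := by
    intro ξ hξ
    apply ContinuousOn.intervalIntegrable
    rw [Set.uIcc_of_le ht]
    exact hcontYt ξ hξ
  have hexpII : IntervalIntegrable (fun s => L / 2 * (N * Real.exp (L * ξbar * s)))
      volume 0 t := (Continuous.intervalIntegrable (by fun_prop)) _ _
  -- pointwise (in ξ) bound
  set C : ℝ := ∫ s in (0:ℝ)..t, L / 2 * (N * Real.exp (L * ξbar * s)) with hCdef
  have hptw : ∀ ξ ∈ Set.Icc (0:ℝ) ξbar,
      |dissT Jm Zbar g Y t ξ - dissT Jm Zbar g Ytilde t ξ| ≤ C := by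
    intro ξ hξ
    have heq : dissT Jm Zbar g Y t ξ - dissT Jm Zbar g Ytilde t ξ
        = ∫ s in (0:ℝ)..t,
            ((1 / 2) * g (∫ η in (0:ℝ)..ξ, dissPhi Jm η (Y s η))
              - (1 / 2) * g (∫ η in (0:ℝ)..ξ, dissPhi Jm η (Ytilde s η))) := by
      simp only [dissT]
      rw [add_sub_add_left_eq_sub, ← intervalIntegral.integral_sub (hIY ξ hξ) (hIYt ξ hξ)]
    rw [heq]
    calc |∫ s in (0:ℝ)..t, ((1 / 2) * g (∫ η in (0:ℝ)..ξ, dissPhi Jm η (Y s η))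
              - (1 / 2) * g (∫ η in (0:ℝ)..ξ, dissPhi Jm η (Ytilde s η)))|
        ≤ ∫ s in (0:ℝ)..t, |(1 / 2) * g (∫ η in (0:ℝ)..ξ, dissPhi Jm η (Y s η))
              - (1 / 2) * g (∫ η in (0:ℝ)..ξ, dissPhi Jm η (Ytilde s η))| :=
          intervalIntegral.abs_integral_le_integral_abs ht
      _ ≤ C := by
          rw [hCdef]
          apply intervalIntegral.integral_mono_on ht
            (((hIY ξ hξ).sub (hIYt ξ hξ)).abs) hexpII
          intro s hs
          have key := dissPhi_int_diff_le hξ0 hJm (hYint s hs.1) (hYtint s hs.1) hξ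
          have hkey2 : |g (∫ η in (0:ℝ)..ξ, dissPhi Jm η (Y s η))
              - g (∫ η in (0:ℝ)..ξ, dissPhi Jm η (Ytilde s η))|
              ≤ L * D s := by
            refine le_trans (hg _ _) ?_
            exact mul_le_mul_of_nonneg_left key hL.le
          have hD := hDle s hs.1
          rw [show (1 / 2 : ℝ) * g (∫ η in (0:ℝ)..ξ, dissPhi Jm η (Y s η))
              - (1 / 2) * g (∫ η in (0:ℝ)..ξ, dissPhi Jm η (Ytilde s η))
              = (1 / 2) * (g (∫ η in (0:ℝ)..ξ, dissPhi Jm η (Y s η))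
                  - g (∫ η in (0:ℝ)..ξ, dissPhi Jm η (Ytilde s η))) by ring,
            abs_mul]
          have : |(1/2 : ℝ)| = 1/2 := by norm_num
          rw [this]
          nlinarith [hkey2, hD, hL.le]
  -- value of C
  have hCval : C = N / (2 * ξbar) * (Real.exp (L * ξbar * t) - 1) := by
    rw [hCdef]
    have hc : (L * ξbar) ≠ 0 := (mul_pos hL hξbar).ne'
    rw [intervalIntegral.integral_const_mul]
    rw [show (fun s => N * Real.exp (L * ξbar * s)) = fun s => N * Real.exp (L * ξbar * s) from rfl]
    rw [intervalIntegral.integral_const_mul]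
    rw [intervalIntegral.integral_comp_mul_left (fun x => Real.exp x) hc]
    rw [mul_zero, integral_exp, Real.exp_zero]
    field_simp
    have h1 : L * L⁻¹ = 1 := mul_inv_cancel₀ hL.ne'
    have h2 : ξbar * ξbar⁻¹ = 1 := mul_inv_cancel₀ hξbar.ne'
    linear_combination N * (Real.exp (L * ξbar * t) - 1) * (L * L⁻¹ * h2 + h1)
  -- conclude
  by_cases hInt : IntervalIntegrable
      (fun ξ => |dissT Jm Zbar g Y t ξ - dissT Jm Zbar g Ytilde t ξ|) volume 0 ξbar
  · have h2 : (∫ ξ in (0:ℝ)..ξbar, |dissT Jm Zbar g Y t ξ - dissT Jm Zbar g Ytilde t ξ|)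
        ≤ ξbar * C := by
      have := intervalIntegral.integral_mono_on hξ0 hInt intervalIntegrable_const hptw
      simpa using this
    have he : (0:ℝ) < Real.exp (-(L * ξbar * t)) := Real.exp_pos _
    have h3 := mul_le_mul_of_nonneg_left h2 he.le
    refine le_trans h3 ?_
    rw [hCval]
    have hprod : Real.exp (-(L * ξbar * t)) * Real.exp (L * ξbar * t) = 1 := by
      rw [← Real.exp_add]; simp
    have hee : (0:ℝ) < Real.exp (-(L * ξbar * t)) := Real.exp_pos _
    have h4 : Real.exp (-(L * ξbar * t)) * (ξbar * (N / (2 * ξbar) *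
        (Real.exp (L * ξbar * t) - 1)))
        = (N / 2) * (1 - Real.exp (-(L * ξbar * t))) := by
      field_simp
      linear_combination N * hprod
    rw [h4]
    nlinarith [hee.le, hNnonneg, Real.exp_pos (-(L * ξbar * t))]
  · rw [intervalIntegral.integral_undef hInt]
    rw [mul_zero]
    exact mul_nonneg (by norm_num) hNnonneg
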